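/- Let A be a unital associative k-algebra and t ∈ A ⊗ A an element satisfying a·t = t·a for all a ∈ A. Then the map Δ : A → A ⊗ A, Δ(a) = a·t, is coassociative: (Δ ⊗ id) ∘ Δ = (id ⊗ Δ) ∘ Δ. -/
import Mathlib

open scoped TensorProduct

section Aux
variable {k : Type*} [Field k] {A : Type*} [Ring A] [Algebra k A]

/-- Auxiliary map `(s⊗r)⊗(u⊗v) ↦ s ⊗ (ru ⊗ v)`. -/
noncomputable def auxΦ : ((A ⊗[k] A) ⊗[k] (A ⊗[k] A)) →ₗ[k] A ⊗[k] (A ⊗[k] A) :=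
  (TensorProduct.map LinearMap.id
      (TensorProduct.map (LinearMap.mul' k A) LinearMap.id)) ∘ₗ
    (TensorProduct.map LinearMap.id
      (TensorProduct.assoc k A A A).symm.toLinearMap) ∘ₗ
    (TensorProduct.assoc k A A (A ⊗[k] A)).toLinearMap

lemma auxΦ_tmul (s r u v : A) :
    auxΦ ((s ⊗ₜ[k] r) ⊗ₜ[k] (u ⊗ₜ[k] v)) = s ⊗ₜ[k] ((r * u) ⊗ₜ[k] v) := by
  simp [auxΦ]

lemma auxΦ_left (y : A ⊗[k] A) (u v : A) :
    auxΦ (y ⊗ₜ[k] (u ⊗ₜ[k] v)) =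
      (TensorProduct.assoc k A A A) ((y * ((1:A) ⊗ₜ[k] u)) ⊗ₜ[k] v) := by
  induction y using TensorProduct.induction_on with
  | zero => simp only [TensorProduct.zero_tmul, LinearEquiv.map_zero, LinearMap.map_zero, zero_mul]
  | tmul s r => simp [auxΦ_tmul, Algebra.TensorProduct.tmul_mul_tmul]
  | add x y hx hy =>
      simp only [TensorProduct.add_tmul, map_add, add_mul, hx, hy]

lemma auxΦ_right (y : A ⊗[k] A) (u v : A) :
    auxΦ ((u ⊗ₜ[k] v) ⊗ₜ[k] y) = u ⊗ₜ[k] (((v ⊗ₜ[k] (1:A)) * y)) := by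
  induction y using TensorProduct.induction_on with
  | zero => simp
  | tmul s r => simp [auxΦ_tmul, Algebra.TensorProduct.tmul_mul_tmul]
  | add x y hx hy =>
      simp only [TensorProduct.tmul_add, map_add, mul_add, hx, hy]

end Aux

/-- If `t ∈ A ⊗ A` is invariant then `Δ(a) := a·t` is coassociative:
`(Δ ⊗ id) ∘ Δ = (id ⊗ Δ) ∘ Δ` (up to the associator of tensor products). -/
theorem stmt_3 {k : Type*} [Field k] {A : Type*} [Ring A] [Algebra k A]
    (t : A ⊗[k] A)
    (ht : ∀ a : A, (a ⊗ₜ[k] (1 : A)) * t = t * ((1 : A) ⊗ₜ[k] a))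
    (Δ : A →ₗ[k] A ⊗[k] A)
    (hΔ : ∀ a : A, Δ a = (a ⊗ₜ[k] (1 : A)) * t) :
    (TensorProduct.assoc k A A A).toLinearMap ∘ₗ
        TensorProduct.map Δ LinearMap.id ∘ₗ Δ
      = TensorProduct.map LinearMap.id Δ ∘ₗ Δ := by
  -- Key identity: Δ(a·b) = (a ⊗ 1) * Δ b
  have hmul : ∀ a b : A, Δ (a * b) = (a ⊗ₜ[k] (1:A)) * Δ b := by
    intro a b
    rw [hΔ, hΔ, ← mul_assoc, Algebra.TensorProduct.tmul_mul_tmul, mul_one]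
  -- S1 : (Δ ⊗ id)((a⊗1)·x) = ((a⊗1)⊗1) · (Δ ⊗ id)(x)
  have S1 : ∀ (a : A) (x : A ⊗[k] A),
      TensorProduct.map Δ LinearMap.id (((a ⊗ₜ[k] (1:A)) * x)) =
        ((a ⊗ₜ[k] (1:A)) ⊗ₜ[k] (1:A)) * TensorProduct.map Δ LinearMap.id x := by
    intro a x
    induction x using TensorProduct.induction_on with
    | zero => simp
    | tmul u v =>
        simp only [Algebra.TensorProduct.tmul_mul_tmul, one_mul, mul_one,
          TensorProduct.map_tmul, LinearMap.id_coe, id_eq, hmul]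
    | add x y hx hy => simp only [mul_add, map_add, hx, hy]
  -- S2 : (id ⊗ Δ)((a⊗1)·x) = (a⊗(1⊗1)) · (id ⊗ Δ)(x)
  have S2 : ∀ (a : A) (x : A ⊗[k] A),
      TensorProduct.map LinearMap.id Δ (((a ⊗ₜ[k] (1:A)) * x)) =
        (a ⊗ₜ[k] ((1:A) ⊗ₜ[k] (1:A))) * TensorProduct.map LinearMap.id Δ x := by
    intro a x
    induction x using TensorProduct.induction_on with
    | zero => simp
    | tmul u v =>
        simp only [Algebra.TensorProduct.tmul_mul_tmul, one_mul, mul_one,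
          TensorProduct.map_tmul, LinearMap.id_coe, id_eq,
          ← Algebra.TensorProduct.one_def]
    | add x y hx hy => simp only [mul_add, map_add, hx, hy]
  -- S3 : assoc is multiplicative for left multiplication by (a⊗1)⊗1
  have S3 : ∀ (a : A) (y : (A ⊗[k] A) ⊗[k] A),
      (TensorProduct.assoc k A A A) ((((a ⊗ₜ[k] (1:A)) ⊗ₜ[k] (1:A))) * y) =
        (a ⊗ₜ[k] ((1:A) ⊗ₜ[k] (1:A))) * (TensorProduct.assoc k A A A) y := by
    intro a y
    induction y using TensorProduct.induction_on with
    | zero => simp only [mul_zero, LinearEquiv.map_zero]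
    | tmul w c =>
        induction w using TensorProduct.induction_on with
        | zero =>
            simp only [TensorProduct.zero_tmul, mul_zero, LinearEquiv.map_zero,
              Algebra.TensorProduct.tmul_mul_tmul, mul_one, one_mul, zero_mul]
        | tmul u v =>
            simp [Algebra.TensorProduct.tmul_mul_tmul]
        | add x y hx hy =>
            simp only [TensorProduct.add_tmul, mul_add, map_add, hx, hy]
    | add x y hx hy => simp only [mul_add, map_add, hx, hy]
  -- claim1 : assoc ∘ (Δ ⊗ id) = Φ(t ⊗ -)
  have claim1 : ∀ x : A ⊗[k] A,
      (TensorProduct.assoc k A A A) (TensorProduct.map Δ LinearMap.id x) =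
        auxΦ (t ⊗ₜ[k] x) := by
    intro x
    induction x using TensorProduct.induction_on with
    | zero => simp
    | tmul u v =>
        rw [auxΦ_left, ← ht u, ← hΔ u]
        simp
    | add x y hx hy =>
        simp only [TensorProduct.tmul_add, map_add, hx, hy]
  -- claim2 : (id ⊗ Δ) = Φ(- ⊗ t)
  have claim2 : ∀ x : A ⊗[k] A,
      TensorProduct.map LinearMap.id Δ x = auxΦ (x ⊗ₜ[k] t) := by
    intro x
    induction x using TensorProduct.induction_on with
    | zero => simp
    | tmul u v =>
        rw [auxΦ_right, ← hΔ v]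
        simp
    | add x y hx hy =>
        simp only [TensorProduct.add_tmul, map_add, hx, hy]
  ext a
  simp only [LinearMap.comp_apply, LinearEquiv.coe_coe]
  rw [hΔ a, S1, S3, S2, claim1, claim2]
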